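/- Suppose integers m₁, m₂, and x₁, x₂ satisfy x_i^2 ≡ j·m_i (mod r) for i = 1, 2 and x₁ - x₂ ≡ d (mod r), where gcd(r, j) = 1 and k is a multiplicative inverse of j modulo r. Set h = m₁ - m₂ and m = m₁ + m₂. Then h^2 + k^2·d^4 ≡ 2·k·d^2·m (mod r). -/
import Mathlib

/-- Squaring identity removing modular square roots: if `xᵢ² ≡ j·mᵢ (mod r)`,
`x₁ - x₂ ≡ d (mod r)` and `j·k ≡ 1 (mod r)`, then with `h = m₁ - m₂`, `m = m₁ + m₂`,
`h² + k²·d⁴ ≡ 2·k·d²·m (mod r)`. -/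
theorem stmt_5 (r : ℕ) (j k d m₁ m₂ x₁ x₂ : ℤ)
    (hjk : j * k ≡ 1 [ZMOD (r : ℤ)])
    (h1 : x₁ ^ 2 ≡ j * m₁ [ZMOD (r : ℤ)]) (h2 : x₂ ^ 2 ≡ j * m₂ [ZMOD (r : ℤ)])
    (hd : x₁ - x₂ ≡ d [ZMOD (r : ℤ)]) :
    (m₁ - m₂) ^ 2 + k ^ 2 * d ^ 4 ≡ 2 * k * d ^ 2 * (m₁ + m₂) [ZMOD (r : ℤ)] := by
  rw [← ZMod.intCast_eq_intCast_iff] at hjk h1 h2 hd ⊢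
  push_cast at hjk h1 h2 hd ⊢
  have e1 : (m₁ : ZMod r) = k * x₁ ^ 2 := by
    calc (m₁ : ZMod r) = (j * k) * m₁ := by rw [hjk]; ring
    _ = k * (j * m₁) := by ring
    _ = k * x₁ ^ 2 := by rw [h1]
  have e2 : (m₂ : ZMod r) = k * x₂ ^ 2 := by
    calc (m₂ : ZMod r) = (j * k) * m₂ := by rw [hjk]; ring
    _ = k * (j * m₂) := by ring
    _ = k * x₂ ^ 2 := by rw [h2]
  rw [e1, e2, ← hd]
  ring
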